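/- For every Borel measurable function f : ℝ → ℝ there exists a perfect set P ⊆ ℝ (nonempty, closed, without isolated points) such that the preimage f⁻¹[P] is both meager and Lebesgue null. -/

import Mathlib

open Set MeasureTheory

section aux

open Filter Topology

lemma aux_setnat_uncountable : Uncountable (Set ℕ) := by
  rw [← not_countable_iff]
  intro h
  obtain ⟨e, he⟩ := exists_injective_nat (Set ℕ)
  exact Function.cantor_injective e he

lemma aux_uncountable : Uncountable (ℕ → Bool) := by
  classical
  have := aux_setnat_uncountable
  have hinj : Function.Injective (fun (s : Set ℕ) => (fun n => decide (n ∈ s) : ℕ → Bool)) := by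
    intro s t hst
    ext n
    have := congrFun hst n
    simpa using this
  exact (⟨_, hinj⟩ : Set ℕ ↪ (ℕ → Bool)).uncountable

lemma aux_perfect_univ : Perfect (univ : Set ℝ) := by
  refine ⟨isClosed_univ, fun x _ => ?_⟩
  have h : (𝓝[≠] x).NeBot := inferInstance
  show (𝓝[≠] x ⊓ Filter.principal univ).NeBot
  rwa [Filter.principal_univ, inf_top_eq]

/-- meager if residually eq to empty set -/
lemma aux_meagre_of_ev {s : Set ℝ} (h : Filter.EventuallyEq (residual ℝ) s (∅ : Set ℝ)) :
    IsMeagre s := by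
  rw [IsMeagre]
  filter_upwards [h] with x hx
  exact fun hs => (show (∅ : Set ℝ) x from hx ▸ hs).elim

lemma aux_open_not_meagre {u : Set ℝ} (hu : IsOpen u) (hne : u.Nonempty) : ¬ IsMeagre u := by
  intro h
  have hd : Dense uᶜ := dense_of_mem_residual h
  obtain ⟨x, hx1, hx2⟩ := hd.inter_open_nonempty u hu hne
  exact hx2 hx1

/-- Category pigeonhole: among pairwise disjoint Baire measurable sets in ℝ,
only countably many are non-meager. -/
lemma aux_countable_nonmeagre {ι : Type*} (As : ι → Set ℝ)
    (hmeas : ∀ i, BaireMeasurableSet (As i)) (hdisj : Pairwise (Function.onFun Disjoint As)) :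
    {i | ¬ IsMeagre (As i)}.Countable := by
  classical
  choose u hu hcong using fun i => (hmeas i).residualEq_isOpen
  obtain ⟨B, hBc, -, hB⟩ := TopologicalSpace.exists_countable_basis ℝ
  have key : ∀ i ∈ {i | ¬ IsMeagre (As i)}, ∃ b ∈ B, b.Nonempty ∧ b ⊆ u i := by
    intro i hi
    have hne : (u i).Nonempty := by
      rcases eq_empty_or_nonempty (u i) with h | h
      · exact absurd (aux_meagre_of_ev (h ▸ hcong i)) hi
      · exact h
    obtain ⟨x, hx⟩ := hne
    obtain ⟨b, hbB, hxb, hbu⟩ := hB.exists_subset_of_mem_open hx (hu i)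
    exact ⟨b, hbB, ⟨x, hxb⟩, hbu⟩
  choose! b hbB hbne hbu using key
  refine MapsTo.countable_of_injOn (fun i hi => hbB i hi) ?_ hBc
  intro i hi j hj hij
  by_contra hne
  have hsub : b i ⊆ u i ∩ u j := subset_inter (hbu i hi) (hij ▸ hbu j hj)
  have hev := (hcong i).symm.inter (hcong j).symm
  have h2 : As i ∩ As j = ∅ := (hdisj hne).inter_eq
  rw [h2] at hev
  have hm : IsMeagre (b i) := (aux_meagre_of_ev hev).mono hsub
  have hbo : IsOpen (b i) := hB.isOpen (hbB i hi)
  exact aux_open_not_meagre hbo (hbne i hi) hm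

end aux

/-- For every Borel function `f : ℝ → ℝ` there is a perfect set `P ⊆ ℝ` whose preimage
`f⁻¹[P]` is both meager and Lebesgue null. -/
theorem stmt14 (f : ℝ → ℝ) (hf : Measurable f) :
    ∃ P : Set ℝ, Perfect P ∧ P.Nonempty ∧ IsMeagre (f ⁻¹' P) ∧ volume (f ⁻¹' P) = 0 := by
  classical
  obtain ⟨g, -, hgc, hgi⟩ := aux_perfect_univ.exists_nat_bool_injection univ_nonempty
  -- the disjoint family of perfect sets
  set A : (ℕ → Bool) → Set (ℕ → Bool) := fun t => {s | ∀ n, s (2 * n) = t n} with hA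
  set P : (ℕ → Bool) → Set ℝ := fun t => g '' A t with hP
  have hAclosed : ∀ t, IsClosed (A t) := by
    intro t
    have : A t = ⋂ n, {s : ℕ → Bool | s (2 * n) = t n} := by
      ext s; simp [hA]
    rw [this]
    exact isClosed_iInter fun n => isClosed_eq (continuous_apply (2 * n)) continuous_const
  have hce := hgc.isClosedEmbedding hgi
  have hPperf : ∀ t, Perfect (P t) := by
    intro t
    constructor
    · exact hce.isClosedMap _ (hAclosed t)
    · rintro y ⟨s, hs, rfl⟩
      rw [accPt_iff_frequently]
      -- sequence converging to s, differing at odd coordinates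
      set seq : ℕ → (ℕ → Bool) := fun k => Function.update s (2 * k + 1) (!(s (2 * k + 1)))
        with hseq
      have hseqA : ∀ k, seq k ∈ A t := by
        intro k n
        have : 2 * n ≠ 2 * k + 1 := by omega
        rw [hseq]
        simp only [Function.update_of_ne this]
        exact hs n
      have hseqne : ∀ k, seq k ≠ s := by
        intro k h
        have := congrFun h (2 * k + 1)
        rw [hseq] at this
        simp at this
      have hseqtend : Filter.Tendsto seq Filter.atTop (nhds s) := by
        rw [tendsto_pi_nhds]
        intro n
        apply Filter.Tendsto.congr' (f₁ := fun _ => s n) _ tendsto_const_nhds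
        filter_upwards [Filter.eventually_ge_atTop (n + 1)] with k hk
        rw [hseq]
        have : 2 * k + 1 ≠ n := by omega
        simp [Function.update_of_ne (Ne.symm this)]
      have htend : Filter.Tendsto (fun k => g (seq k)) Filter.atTop (nhds (g s)) :=
        (hgc.tendsto s).comp hseqtend
      apply htend.frequently
      apply Filter.Frequently.of_forall
      intro k
      exact ⟨fun h => hseqne k (hgi h), ⟨seq k, hseqA k, rfl⟩⟩
  have hPne : ∀ t, (P t).Nonempty := by
    intro t
    refine ⟨g (fun m => t (m / 2)), (fun m => t (m / 2)), fun n => ?_, rfl⟩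
    simp [Nat.mul_div_cancel_left]
  have hPdisj : Pairwise (Function.onFun Disjoint P) := by
    intro t t' htt'
    rw [Function.onFun, disjoint_left]
    rintro y ⟨s, hs, rfl⟩ ⟨s', hs', heq⟩
    apply htt'
    funext n
    have := hgi heq
    rw [← hs n, ← hs' n, this]
  -- the preimages
  set As : (ℕ → Bool) → Set ℝ := fun t => f ⁻¹' P t with hAs
  have hAsmeas : ∀ t, MeasurableSet (As t) := fun t =>
    hf ((hPperf t).closed.measurableSet)
  have hAsdisj : Pairwise (Function.onFun Disjoint As) := fun t t' h =>
    Disjoint.preimage f (hPdisj h)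
  have hcnt1 : {t | 0 < volume (As t)}.Countable :=
    Measure.countable_meas_pos_of_disjoint_iUnion hAsmeas hAsdisj
  have hcnt2 : {t | ¬ IsMeagre (As t)}.Countable :=
    aux_countable_nonmeagre As (fun t => (hAsmeas t).baireMeasurableSet) hAsdisj
  have := aux_uncountable
  have huniv : ¬ (univ : Set (ℕ → Bool)).Countable := not_countable_univ
  have hex : ∃ t, t ∉ {t | 0 < volume (As t)} ∪ {t | ¬ IsMeagre (As t)} := by
    by_contra h
    push_neg at h
    apply huniv
    apply (hcnt1.union hcnt2).mono
    intro t _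
    exact h t
  obtain ⟨t, ht⟩ := hex
  simp only [mem_union, mem_setOf_eq, not_or, not_lt, nonpos_iff_eq_zero, not_not] at ht
  exact ⟨P t, hPperf t, hPne t, ht.2, ht.1⟩
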